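/- There are no self-dual modern-and-synchronized Tamari intervals of even size, and for k ≥ 0 the number of self-dual Tamari intervals of size 2k+1 that are both modern and synchronized equals the Catalan number (1/(k+1)) · C(2k, k). -/

import Mathlib

/-- Binary trees: a leaf or a binary node with two subtrees. -/
inductive BT : Type
  | leaf : BT
  | node : BT → BT → BT

namespace BT

/-- Number of binary (internal) nodes. -/
def size : BT → ℕ
  | leaf => 0
  | node l r => l.size + r.size + 1

/-- One right rotation somewhere in the tree: ((A,B),C) ↦ (A,(B,C)). -/
inductive Rot : BT → BT → Prop
  | rotate (A B C : BT) : Rot (node (node A B) C) (node A (node B C))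
  | left {l l' : BT} (r : BT) : Rot l l' → Rot (node l r) (node l' r)
  | right (l : BT) {r r' : BT} : Rot r r' → Rot (node l r) (node l r')

/-- Tamari order: reflexive-transitive closure of right rotation. -/
def tle (T T' : BT) : Prop := Relation.ReflTransGen Rot T T'

/-- Bracket-vector: sizes of right subtrees of nodes, in infix order. -/
def bracket : BT → List ℕ
  | leaf => []
  | node l r => bracket l ++ r.size :: bracket r

/-- Dual bracket-vector: sizes of left subtrees of nodes, in infix order. -/
def dualBracket : BT → List ℕ
  | leaf => []
  | node l r => dualBracket l ++ l.size :: dualBracket r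

/-- Canopy word: for each leaf (left to right), 1 if it is a left child, 0 if a right child;
the argument `b` is the value assigned to the tree if it is itself a leaf. -/
def canopyAux (b : ℕ) : BT → List ℕ
  | leaf => [b]
  | node l r => canopyAux 1 l ++ canopyAux 0 r

/-- Canopy-vector of a binary tree. -/
def canopy (T : BT) : List ℕ := canopyAux 1 T

/-- Left-right mirror. -/
def mir : BT → BT
  | leaf => leaf
  | node l r => node (mir r) (mir l)

/-- Tamari interval of size n. -/
def interval (p : BT × BT) (n : ℕ) : Prop :=
  p.1.size = n ∧ p.2.size = n ∧ tle p.1 p.2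

/-- Tamari interval (of unspecified size). -/
def isInt (p : BT × BT) : Prop := p.1.size = p.2.size ∧ tle p.1 p.2

/-- The rise operation (T,T') ↦ ((T,ε),(ε,T')). -/
def riseF (p : BT × BT) : BT × BT := (node p.1 leaf, node leaf p.2)

/-- An interval is modern when its rise is again an interval. -/
def modern (p : BT × BT) : Prop := tle (node p.1 leaf) (node leaf p.2)

/-- Infinitely modern: every iterated rise is an interval. -/
def infModern (p : BT × BT) : Prop :=
  ∀ k : ℕ, tle ((riseF^[k] p).1) ((riseF^[k] p).2)

/-- Synchronized: equal canopies. -/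
def synced (p : BT × BT) : Prop := canopy p.1 = canopy p.2

/-- Self-dual: equal to its dual (mir T', mir T). -/
def selfDual (p : BT × BT) : Prop := mir p.2 = p.1 ∧ mir p.1 = p.2

/-- Number of positions where the two canopies agree. -/
def agreeCount (p : BT × BT) : ℕ :=
  ((List.range (p.1.size + 1)).filter
    (fun i => (canopy p.1).getD i 0 == (canopy p.2).getD i 0)).length

/-- Number of canopy positions of joint type (a on top, b on bottom), for an interval (T,T')
with T' the upper tree. -/
def typeCount (a b : ℕ) (p : BT × BT) : ℕ :=
  ((List.range (p.1.size + 1)).filter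
    (fun i => ((canopy p.2).getD i 0 == a) && ((canopy p.1).getD i 0 == b))).length

end BT

namespace BT

/-! ### Basic lemmas -/

lemma size_mir (T : BT) : T.mir.size = T.size := by
  induction T with
  | leaf => rfl
  | node l r ihl ihr => simp [mir, size, ihl, ihr]; omega

lemma mir_mir (T : BT) : T.mir.mir = T := by
  induction T with
  | leaf => rfl
  | node l r ihl ihr => simp [mir, ihl, ihr]

lemma canopyAux_node (b : ℕ) (l r : BT) :
    canopyAux b (node l r) = canopyAux 1 l ++ canopyAux 0 r := rfl

lemma canopyAux_indep (b b' : ℕ) (l r : BT) :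
    canopyAux b (node l r) = canopyAux b' (node l r) := rfl

lemma length_canopyAux (b : ℕ) (T : BT) : (canopyAux b T).length = T.size + 1 := by
  induction T generalizing b with
  | leaf => rfl
  | node l r ihl ihr => simp [canopyAux, size, ihl, ihr]; omega

lemma length_canopy (T : BT) : (canopy T).length = T.size + 1 := length_canopyAux 1 T

lemma canopyAux_mem_le_one (b : ℕ) (hb : b ≤ 1) (T : BT) : ∀ x ∈ canopyAux b T, x ≤ 1 := by
  induction T generalizing b with
  | leaf => intro x hx; simp [canopyAux] at hx; omega
  | node l r ihl ihr =>
    intro x hx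
    simp only [canopyAux, List.mem_append] at hx
    rcases hx with hx | hx
    · exact ihl 1 le_rfl x hx
    · exact ihr 0 (by norm_num) x hx

lemma canopyAux_mir (T : BT) (b : ℕ) (hb : b ≤ 1) :
    canopyAux b (mir T) = ((canopyAux (1 - b) T).map (fun x => 1 - x)).reverse := by
  induction T generalizing b with
  | leaf => interval_cases b <;> rfl
  | node l r ihl ihr =>
    simp only [mir, canopyAux_node, List.map_append, List.reverse_append]
    rw [ihr 1 le_rfl, ihl 0 (by norm_num)]

lemma canopy_mir (T : BT) :
    canopy (mir T) = ((canopyAux 0 T).map (fun x => 1 - x)).reverse := by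
  simpa [canopy] using canopyAux_mir T 1 le_rfl

end BT
namespace BT

/-! ### Snakes and Dyck words -/

/-- Build a snake on top of a core tree. -/
def snkC : List Bool → BT → BT
  | [], C => C
  | true :: w, C => node (snkC w C) leaf
  | false :: w, C => node leaf (snkC w C)

/-- Snake tree of a word. -/
def snk (w : List Bool) : BT := snkC w (node leaf leaf)

/-- Letter-flip of a word. -/
def neg (w : List Bool) : List Bool := w.map (!·)

@[simp] lemma neg_nil : neg [] = [] := rfl
@[simp] lemma neg_cons (b : Bool) (w : List Bool) : neg (b :: w) = (!b) :: neg w := rfl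
@[simp] lemma neg_append (u v : List Bool) : neg (u ++ v) = neg u ++ neg v := List.map_append
@[simp] lemma neg_neg (w : List Bool) : neg (neg w) = w := by
  simp [neg, List.map_map, Function.comp_def]

/-- Dyck words. -/
inductive Dy : List Bool → Prop
  | nil : Dy []
  | cons {u v : List Bool} : Dy u → Dy v → Dy (true :: u ++ false :: v)

lemma snkC_append (u v : List Bool) (C : BT) : snkC (u ++ v) C = snkC u (snkC v C) := by
  induction u with
  | nil => rfl
  | cons b w ih => cases b <;> simp [snkC, ih]

lemma size_snkC (w : List Bool) (C : BT) : (snkC w C).size = w.length + C.size := by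
  induction w with
  | nil => simp [snkC]
  | cons b t ih => cases b <;> simp [snkC, size, ih] <;> omega

lemma size_snk (w : List Bool) : (snk w).size = w.length + 1 := by
  simp [snk, size_snkC, size]

lemma mir_snkC (w : List Bool) (C : BT) : mir (snkC w C) = snkC (neg w) (mir C) := by
  induction w with
  | nil => rfl
  | cons b t ih => cases b <;> simp [snkC, mir, ih, neg]

lemma mir_snk (w : List Bool) : mir (snk w) = snk (neg w) := by
  simp [snk, mir_snkC, mir]

/-! ### tle machinery -/

lemma tle_refl (T : BT) : tle T T := Relation.ReflTransGen.refl

lemma tle_trans {a b c : BT} (h1 : tle a b) (h2 : tle b c) : tle a c := h1.trans h2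

lemma tle_of_rot {a b : BT} (h : Rot a b) : tle a b := Relation.ReflTransGen.single h

lemma tle_node_left {l l' : BT} (r : BT) (h : tle l l') : tle (node l r) (node l' r) :=
  Relation.ReflTransGen.lift (fun x => node x r) (fun _ _ hr => Rot.left r hr) _ _ h

lemma tle_node_right (l : BT) {r r' : BT} (h : tle r r') : tle (node l r) (node l r') :=
  Relation.ReflTransGen.lift (fun x => node l x) (fun _ _ hr => Rot.right l hr) _ _ h

lemma tle_snkC (u : List Bool) {X Y : BT} (h : tle X Y) : tle (snkC u X) (snkC u Y) := by
  induction u with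
  | nil => exact h
  | cons b t ih => cases b <;> simp only [snkC] <;>
    [exact tle_node_right _ ih; exact tle_node_left _ ih]

/-- Key transport lemma J. -/
lemma tle_J (c : List Bool) {E F : BT} (h : tle (node E leaf) (node leaf F)) :
    tle (node (snkC c (node E leaf)) leaf) (node leaf (snkC c (node F leaf))) := by
  induction c with
  | nil =>
    exact tle_trans (tle_node_left leaf h) (tle_of_rot (Rot.rotate leaf F leaf))
  | cons b t ih =>
    cases b
    · -- false : snkC (false::t) X = node leaf (snkC t X)
      simp only [snkC]
      refine tle_trans (tle_of_rot (Rot.rotate leaf (snkC t (node E leaf)) leaf)) ?_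
      exact tle_node_right leaf ih
    · -- true : snkC (true::t) X = node (snkC t X) leaf
      simp only [snkC]
      refine tle_trans (tle_node_left leaf ih) ?_
      exact tle_of_rot (Rot.rotate leaf (snkC t (node F leaf)) leaf)

/-- Main lemma H : modern-style comparison for Dyck snakes over any core. -/
lemma tle_H {u : List Bool} (hu : Dy u) :
    ∀ D : BT, tle (node (snkC u (node leaf D)) leaf) (node leaf (snkC (neg u) (node D leaf))) := by
  induction hu with
  | nil => exact fun D => tle_of_rot (Rot.rotate leaf D leaf)
  | @cons a b _ _ iha ihb =>
    intro D
    have e1 : snkC (true :: a ++ false :: b) (node leaf D) =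
        node (snkC a (node leaf (snkC b (node leaf D)))) leaf := by
      simp [snkC, snkC_append, neg]
    have e2 : snkC (neg (true :: a ++ false :: b)) (node D leaf) =
        node leaf (snkC (neg a) (node (snkC (neg b) (node D leaf)) leaf)) := by
      simp [snkC, snkC_append, neg]
    rw [e1, e2]
    set Q := snkC b (node leaf D) with hQ
    set R' := snkC (neg b) (node D leaf) with hR
    refine tle_trans (tle_node_left leaf (iha Q)) ?_
    refine tle_trans (tle_of_rot (Rot.rotate leaf (snkC (neg a) (node Q leaf)) leaf)) ?_
    exact tle_node_right leaf (tle_J (neg a) (ihb D))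

/-- tle between a Dyck snake and its mirror. -/
lemma tle_G {w : List Bool} (hw : Dy w) : tle (snk w) (snk (neg w)) := by
  induction hw with
  | nil => exact tle_refl _
  | @cons u v hu hv ihu ihv =>
    have e1 : snk (true :: u ++ false :: v) =
        node (snkC u (node leaf (snk v))) leaf := by
      simp [snk, snkC, snkC_append, neg]
    have e2 : snk (neg (true :: u ++ false :: v)) =
        node leaf (snkC (neg u) (node (snk (neg v)) leaf)) := by
      simp [snk, snkC, snkC_append, neg]
    rw [e1, e2]
    refine tle_trans (tle_node_left leaf (tle_snkC u (tle_node_right leaf ihv))) ?_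
    exact tle_H hu (snk (neg v))

/-- Modern for Dyck snakes. -/
lemma modern_snk {w : List Bool} (hw : Dy w) :
    tle (node (snk w) leaf) (node leaf (snk (neg w))) := tle_H hw leaf

end BT
namespace BT

/-! ### Canopy structure -/

lemma canopyAux_last (y : BT) (b : ℕ) :
    (y = leaf ∧ canopyAux b y = [b]) ∨ ∃ s, canopyAux b y = s ++ [0] := by
  induction y generalizing b with
  | leaf => exact Or.inl ⟨rfl, rfl⟩
  | node y1 y2 ih1 ih2 =>
    right
    rcases ih2 0 with ⟨_, h⟩ | ⟨s, h⟩
    · exact ⟨canopyAux 1 y1, by rw [canopyAux_node, h]⟩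
    · exact ⟨canopyAux 1 y1 ++ s, by rw [canopyAux_node, h, List.append_assoc]⟩

lemma canopyAux_head (y : BT) (b : ℕ) :
    (y = leaf ∧ canopyAux b y = [b]) ∨ ∃ s, canopyAux b y = 1 :: s := by
  induction y generalizing b with
  | leaf => exact Or.inl ⟨rfl, rfl⟩
  | node y1 y2 ih1 ih2 =>
    right
    rcases ih1 1 with ⟨_, h⟩ | ⟨s, h⟩
    · exact ⟨canopyAux 0 y2, by rw [canopyAux_node, h]; rfl⟩
    · exact ⟨s ++ canopyAux 0 y2, by rw [canopyAux_node, h]; rfl⟩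

lemma zero_mem_canopyAux0 (y : BT) : 0 ∈ canopyAux 0 y := by
  induction y with
  | leaf => simp [canopyAux]
  | node y1 y2 ih1 ih2 =>
    rcases canopyAux_last y2 0 with ⟨_, h⟩ | ⟨s, h⟩ <;>
      simp [canopyAux_node, h]

lemma no_01 (s t : List ℕ) (a b : ℕ) :
    s ++ 0 :: 1 :: t ≠ List.replicate a 1 ++ List.replicate b 0 := by
  induction s generalizing a with
  | nil =>
    intro h
    cases a with
    | zero =>
      simp at h
      have : (1:ℕ) ∈ List.replicate b 0 := by
        rw [← h]; simp
      simp at this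
    | succ a => simp [List.replicate_succ] at h
  | cons x s ih =>
    intro h
    cases a with
    | zero =>
      simp only [List.replicate, List.nil_append] at h
      have : (1:ℕ) ∈ List.replicate b 0 := by
        rw [← h]; simp
      simp at this
    | succ a =>
      rw [List.replicate_succ, List.cons_append, List.cons_append] at h
      exact ih a (by injection h with _ h2)

/-- A tree whose canopy is 1^a 0^b is a snake. -/
lemma snake_of_canopy : ∀ (T : BT) (a b : ℕ),
    canopy T = List.replicate a 1 ++ List.replicate b 0 → T = leaf ∨ ∃ w, T = snk w := by
  intro T
  induction T with
  | leaf => intro a b _; exact Or.inl rfl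
  | node l r ihl ihr =>
    intro a b hcan
    right
    rw [show canopy (node l r) = canopyAux 1 l ++ canopyAux 0 r from rfl] at hcan
    cases r with
    | leaf =>
      -- canopy = canopy l ++ [0]
      cases l with
      | leaf => exact ⟨[], rfl⟩
      | node l1 l2 =>
        -- b ≥ 1 : last entry of RHS...
        have hzero : (0:ℕ) ∈ canopyAux 1 (node l1 l2) := by
          rcases canopyAux_last (node l1 l2) 1 with ⟨h, _⟩ | ⟨s, h⟩
          · exact absurd h (by simp)
          · rw [h]; simp
        have hb : 1 ≤ b := by
          by_contra hb
          have hb0 : b = 0 := by omega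
          subst hb0
          have h1 : canopyAux 1 (node l1 l2) ++ canopyAux 0 leaf
              = List.replicate a 1 ++ [] := by simpa using hcan
          have : (0:ℕ) ∈ List.replicate a 1 ++ ([] : List ℕ) := by
            rw [← h1]; exact List.mem_append_left _ hzero
          simp at this
        have hsplit : canopyAux 1 (node l1 l2) = List.replicate a 1 ++ List.replicate (b-1) 0 := by
          have : canopyAux 1 (node l1 l2) ++ [0]
              = (List.replicate a 1 ++ List.replicate (b-1) 0) ++ [0] := by
            rw [List.append_assoc]
            rw [show List.replicate (b-1) 0 ++ [(0:ℕ)] = List.replicate b 0 by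
              rw [← List.replicate_succ' (n := b-1)]
              congr 1; omega]
            simpa [canopyAux] using hcan
          exact List.append_inj_left' this rfl
        rcases ihl a (b-1) hsplit with h | ⟨w, hw⟩
        · exact absurd h (by simp)
        · exact ⟨true :: w, by rw [show snk (true :: w) = node (snk w) leaf from rfl, hw]⟩
    | node r1 r2 =>
      cases l with
      | leaf =>
        -- canopy = 1 :: canopy r
        have ha : 1 ≤ a := by
          rcases a with _ | a
          · rcases b with _ | b
            · exfalso
              have hl := length_canopyAux 0 (node r1 r2)
              simp at hcan
              rw [hcan.2] at hl
              simp [size] at hl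
            · rw [List.replicate_succ] at hcan
              simp [canopyAux] at hcan
          · omega
        have hone : (1:ℕ) ∈ canopyAux 0 (node r1 r2) := by
          rcases canopyAux_head (node r1 r2) 0 with ⟨h, _⟩ | ⟨s, h⟩
          · exact absurd h (by simp)
          · rw [h]; simp
        have hsplit : canopyAux 0 (node r1 r2)
            = List.replicate (a-1) 1 ++ List.replicate b 0 := by
          have h1 : (1:ℕ) :: canopyAux 0 (node r1 r2)
              = 1 :: (List.replicate (a-1) 1 ++ List.replicate b 0) := by
            rw [show (1:ℕ) :: (List.replicate (a-1) 1 ++ List.replicate b 0)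
                = List.replicate a 1 ++ List.replicate b 0 by
              rw [← List.cons_append]
              congr 1
              rw [← List.replicate_succ]
              congr 1; omega]
            simpa [canopyAux] using hcan
          injection h1
        have hc : canopy (node r1 r2) = List.replicate (a-1) 1 ++ List.replicate b 0 := hsplit
        rcases ihr (a-1) b hc with h | ⟨w, hw⟩
        · exact absurd h (by simp)
        · exact ⟨false :: w, by rw [show snk (false :: w) = node leaf (snk w) from rfl, hw]⟩
      | node l1 l2 =>
        exfalso
        rcases canopyAux_last (node l1 l2) 1 with ⟨h, _⟩ | ⟨s, h⟩
        · exact absurd h (by simp)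
        rcases canopyAux_head (node r1 r2) 0 with ⟨h', _⟩ | ⟨t, h'⟩
        · exact absurd h' (by simp)
        rw [h, h'] at hcan
        exact no_01 s t a b (by simpa using hcan)

/-- Canopy of a snake. -/
lemma canopy_snk (w : List Bool) :
    canopy (snk w) = List.replicate (w.count false + 1) 1
      ++ List.replicate (w.count true + 1) 0 := by
  induction w with
  | nil => rfl
  | cons b t ih =>
    cases b
    · have : canopy (snk (false :: t)) = 1 :: canopy (snk t) := by
        rw [show snk (false :: t) = node leaf (snk t) from rfl]
        rw [show canopy (node leaf (snk t)) = canopyAux 1 leaf ++ canopyAux 0 (snk t) from rfl]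
        cases ht : snk t with
        | leaf =>
          exfalso
          have := size_snk t
          rw [ht] at this
          simp [size] at this
        | node x y => simp [canopyAux, canopy, ← ht, canopyAux_indep 0 1 x y]
      rw [this, ih]
      simp [List.count_cons, List.replicate_succ]
    · have : canopy (snk (true :: t)) = canopy (snk t) ++ [0] := by
        rw [show snk (true :: t) = node (snk t) leaf from rfl]
        rfl
      rw [this, ih]
      rw [List.append_assoc, show List.replicate (t.count true + 1) (0:ℕ) ++ [0]
          = List.replicate (t.count true + 1 + 1) 0 from List.replicate_succ'.symm]
      simp [List.count_cons]

end BT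
namespace BT

/-! ### Canopy is monotone along rotations -/

/-- Pointwise order on equally-long lists. -/
def cle (l l' : List ℕ) : Prop := l.length = l'.length ∧ ∀ i, l.getD i 0 ≤ l'.getD i 0

lemma cle_refl (l : List ℕ) : cle l l := ⟨rfl, fun _ => le_rfl⟩

lemma cle_trans {a b c : List ℕ} (h1 : cle a b) (h2 : cle b c) : cle a c :=
  ⟨h1.1.trans h2.1, fun i => (h1.2 i).trans (h2.2 i)⟩

lemma cle_append {l1 l2 r1 r2 : List ℕ} (hl : cle l1 l2) (hr : cle r1 r2) :
    cle (l1 ++ r1) (l2 ++ r2) := by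
  refine ⟨by simp [hl.1, hr.1], fun i => ?_⟩
  by_cases h : i < l1.length
  · rw [List.getD_append _ _ _ _ h, List.getD_append _ _ _ _ (hl.1 ▸ h)]
    exact hl.2 i
  · push_neg at h
    rw [List.getD_append_right _ _ _ _ h, List.getD_append_right _ _ _ _ (hl.1 ▸ h), hl.1]
    exact hr.2 _

lemma cle_can01 (B : BT) : cle (canopyAux 0 B) (canopyAux 1 B) := by
  cases B with
  | leaf => exact ⟨rfl, fun i => by cases i <;> simp [canopyAux]⟩
  | node x y => rw [canopyAux_indep 0 1]; exact cle_refl _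

lemma rot_cle {T T' : BT} (h : Rot T T') : ∀ b, cle (canopyAux b T) (canopyAux b T') := by
  induction h with
  | rotate A B C =>
    intro b
    rw [show canopyAux b (node (node A B) C)
        = canopyAux 1 A ++ (canopyAux 0 B ++ canopyAux 0 C) by
      simp [canopyAux_node, List.append_assoc]]
    rw [show canopyAux b (node A (node B C))
        = canopyAux 1 A ++ (canopyAux 1 B ++ canopyAux 0 C) from rfl]
    exact cle_append (cle_refl _) (cle_append (cle_can01 B) (cle_refl _))
  | left r _ ih =>
    intro b
    rw [canopyAux_node, canopyAux_node]
    exact cle_append (ih 1) (cle_refl _)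
  | right l _ ih =>
    intro b
    rw [canopyAux_node, canopyAux_node]
    exact cle_append (cle_refl _) (ih 0)

lemma tle_cle {T T' : BT} (h : tle T T') : cle (canopy T) (canopy T') := by
  induction h with
  | refl => exact cle_refl _
  | tail _ h2 ih => exact cle_trans ih (rot_cle h2 1)

lemma getD_append_zero (l : List ℕ) (j : ℕ) : (l ++ [0]).getD j 0 = l.getD j 0 := by
  by_cases h : j < l.length
  · exact List.getD_append _ _ _ _ h
  · push_neg at h
    rw [List.getD_append_right _ _ _ _ h, List.getD_eq_default _ _ h]
    rcases Nat.lt_or_ge (j - l.length) 1 with h2 | h2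
    · interval_cases hj : (j - l.length); rfl
    · exact List.getD_eq_default _ _ (by simpa using h2)

/-- A {0,1}-valued weakly decreasing list is 1^a 0^b. -/
lemma dec_rep : ∀ (l : List ℕ), (∀ x ∈ l, x ≤ 1) → (∀ i, l.getD (i+1) 0 ≤ l.getD i 0) →
    ∃ a b, a + b = l.length ∧ l = List.replicate a 1 ++ List.replicate b 0 := by
  intro l
  induction l with
  | nil => exact fun _ _ => ⟨0, 0, rfl, rfl⟩
  | cons x t ih =>
    intro hle hdec
    obtain ⟨a, b, hab, ht⟩ := ih (fun y hy => hle y (List.mem_cons_of_mem _ hy))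
      (fun i => by simpa using hdec (i+1))
    rcases Nat.lt_or_ge x 1 with hx | hx
    · -- x = 0 : a must be 0
      have hx0 : x = 0 := by omega
      have ha : a = 0 := by
        by_contra ha
        have h1 : t.getD 0 0 = 1 := by
          rw [ht]
          rcases a with _ | a; · omega
          rw [List.replicate_succ]; rfl
        have h2 := hdec 0
        rw [List.getD_cons_succ, List.getD_cons_zero, hx0] at h2
        omega
      subst ha hx0
      simp at ht
      exact ⟨0, b+1, by simp; omega, by rw [List.replicate_succ]; simp [ht]⟩
    · have hx1 : x = 1 := le_antisymm (hle x (List.mem_cons_self)) hx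
      subst hx1
      exact ⟨a+1, b, by simp; omega, by rw [List.replicate_succ]; simp [ht]⟩

/-- The canopy of the bottom tree of a modern synchronized self-dual interval
on a non-leaf tree is of the form 1^a 0^a. -/
lemma canopy_shape {T : BT} (hT : T ≠ leaf)
    (hmod : tle (node T leaf) (node leaf (mir T)))
    (hsync : canopy T = canopy (mir T)) :
    ∃ a, canopy T = List.replicate a 1 ++ List.replicate a 0 ∧ T.size + 1 = a + a := by
  obtain ⟨l, r, hTn⟩ : ∃ l r, T = node l r := by
    cases T with
    | leaf => exact absurd rfl hT
    | node l r => exact ⟨l, r, rfl⟩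
  have hmirn : ∃ l r, mir T = node l r := by
    rw [hTn]; exact ⟨mir r, mir l, rfl⟩
  obtain ⟨ml, mr, hmn⟩ := hmirn
  -- canopy of rise endpoints
  have hcan1 : canopy (node T leaf) = canopy T ++ [0] := rfl
  have hcan2 : canopy (node leaf (mir T)) = 1 :: canopy (mir T) := by
    rw [show canopy (node leaf (mir T)) = canopyAux 1 leaf ++ canopyAux 0 (mir T) from rfl]
    rw [hmn, canopyAux_indep 0 1]
    rfl
  have hcle := tle_cle hmod
  rw [hcan1, hcan2, ← hsync] at hcle
  -- decreasing
  have hdec : ∀ i, (canopy T).getD (i+1) 0 ≤ (canopy T).getD i 0 := by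
    intro i
    have := hcle.2 (i+1)
    rw [getD_append_zero, List.getD_cons_succ] at this
    exact this
  obtain ⟨a, b, hab, hrep⟩ := dec_rep (canopy T)
    (canopyAux_mem_le_one 1 le_rfl T) hdec
  -- antipalindromic : canopy T = canopy (mir T) = reverse (map (1-·) (canopy T))
  have hanti : canopy T = ((canopy T).map (fun x => 1 - x)).reverse := by
    conv_lhs => rw [hsync, canopy_mir]
    congr 2
    rw [hTn, canopyAux_indep 0 1]
    rfl
  have hcount : a = b := by
    have h1 : (canopy T).count 1 = a := by
      rw [hrep]; simp [List.count_replicate]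
    have h2 : (canopy T).count 1 = b := by
      conv_lhs => rw [hanti, hrep]
      simp [List.count_reverse, List.count_replicate]
    omega
  subst hcount
  refine ⟨a, hrep, ?_⟩
  have := length_canopy T
  omega

end BT
namespace BT

/-! ### Bracket vectors -/

lemma length_bracket (T : BT) : (bracket T).length = T.size := by
  induction T with
  | leaf => rfl
  | node l r ihl ihr => simp [bracket, size, ihl, ihr]; omega

lemma bracket_mem_lt (T : BT) : ∀ x ∈ bracket T, x < T.size := by
  induction T with
  | leaf => simp [bracket]
  | node l r ihl ihr =>
    intro x hx
    simp only [bracket, List.mem_append, List.mem_cons] at hx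
    simp only [size]
    rcases hx with h | h | h
    · have := ihl x h; omega
    · omega
    · have := ihr x h; omega

lemma rot_size {T T' : BT} (h : Rot T T') : T'.size = T.size := by
  induction h with
  | rotate A B C => simp [size]; omega
  | left r _ ih => simp [size, ih]
  | right l _ ih => simp [size, ih]

lemma cle_cons {x y : ℕ} {t t' : List ℕ} (hxy : x ≤ y) (h : cle t t') :
    cle (x :: t) (y :: t') := by
  refine ⟨by simp [h.1], fun i => ?_⟩
  cases i with
  | zero => simpa using hxy
  | succ n => simpa [List.getD_cons_succ] using h.2 n

lemma rot_br {T T' : BT} (h : Rot T T') : cle (bracket T) (bracket T') := by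
  induction h with
  | rotate A B C =>
    rw [show bracket (node (node A B) C)
        = bracket A ++ B.size :: (bracket B ++ C.size :: bracket C) by
      simp [bracket]]
    rw [show bracket (node A (node B C))
        = bracket A ++ (B.size + C.size + 1) :: (bracket B ++ C.size :: bracket C) by
      simp [bracket, size]]
    exact cle_append (cle_refl _) (cle_cons (by omega) (cle_refl _))
  | left r hrot ih =>
    simp only [bracket]
    exact cle_append ih (cle_cons le_rfl (cle_refl _))
  | right l hrot ih =>
    simp only [bracket]
    exact cle_append (cle_refl _) (cle_cons (rot_size hrot).symm.le ih)

lemma tle_br {T T' : BT} (h : tle T T') : cle (bracket T) (bracket T') := by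
  induction h with
  | refl => exact cle_refl _
  | tail _ h2 ih => exact cle_trans ih (rot_br h2)

lemma br_snk_nil : bracket (snk []) = [0] := rfl

lemma br_snk_true (w : List Bool) : bracket (snk (true :: w)) = bracket (snk w) ++ [0] := rfl

lemma br_snk_false (w : List Bool) :
    bracket (snk (false :: w)) = (w.length + 1) :: bracket (snk w) := by
  rw [show snk (false :: w) = node leaf (snk w) from rfl]
  simp [bracket, size_snk]

lemma br_getD_lt (w : List Bool) (i : ℕ) (hi : i < w.length + 1) :
    (bracket (snk w)).getD i 0 < w.length + 1 := by
  have hlen : (bracket (snk w)).length = w.length + 1 := by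
    rw [length_bracket, size_snk]
  have hmem : (bracket (snk w)).getD i 0 ∈ bracket (snk w) := by
    rw [List.getD_eq_getElem _ _ (by omega)]
    exact List.getElem_mem _
  have := bracket_mem_lt (snk w) _ hmem
  rwa [size_snk] at this

/-- Shifted pointwise bracket comparison implies the ballot condition with slack. -/
lemma ballot_of_br : ∀ (w : List Bool) (d : ℕ),
    (∀ i, (bracket (snk w)).getD (i + d) 0 ≤ (bracket (snk (neg w))).getD i 0) →
    ∀ p q, w = p ++ q → p.count false ≤ p.count true + d := by
  intro w
  induction w with
  | nil =>
    intro d _ p q hpq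
    have : p = [] := by
      rcases List.append_eq_nil_iff.mp hpq.symm with ⟨h, _⟩; exact h
    simp [this]
  | cons b v ih =>
    intro d hbr p q hpq
    cases b
    · -- w = false :: v
      cases d with
      | zero =>
        exfalso
        have h0 := hbr 0
        rw [show neg (false :: v) = true :: neg v from rfl, br_snk_false, br_snk_true] at h0
        simp only [Nat.zero_add, List.getD_cons_zero] at h0
        rw [getD_append_zero] at h0
        have hlt : (bracket (snk (neg v))).getD 0 0 < v.length + 1 := by
          have := br_getD_lt (neg v) 0 (by simp [neg])
          simpa [neg] using this
        omega
      | succ d' =>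
        have hbr' : ∀ i, (bracket (snk v)).getD (i + d') 0
            ≤ (bracket (snk (neg v))).getD i 0 := by
          intro i
          have := hbr i
          rw [show neg (false :: v) = true :: neg v from rfl, br_snk_false, br_snk_true,
            show i + (d' + 1) = (i + d') + 1 by omega, List.getD_cons_succ,
            getD_append_zero] at this
          exact this
        rcases p with _ | ⟨pb, p'⟩
        · simp
        · have hcons : pb = false ∧ v = p' ++ q := by
            rw [List.cons_append] at hpq
            exact ⟨(List.cons.injEq _ _ _ _ ▸ hpq).1.symm ▸ rfl, by injection hpq⟩
          obtain ⟨hpb, hv⟩ := hcons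
          subst hpb
          have := ih d' hbr' p' q hv
          simp [List.count_cons]
          omega
    · -- w = true :: v
      have hbr' : ∀ i, (bracket (snk v)).getD (i + (d+1)) 0
          ≤ (bracket (snk (neg v))).getD i 0 := by
        intro i
        have := hbr (i + 1)
        rw [show neg (true :: v) = false :: neg v from rfl, br_snk_true, br_snk_false,
          List.getD_cons_succ, getD_append_zero] at this
        rw [show i + (d + 1) = i + 1 + d by omega]
        exact this
      rcases p with _ | ⟨pb, p'⟩
      · simp
      · have hpb : pb = true := by
          rw [List.cons_append] at hpq
          injection hpq with h1 _
          exact h1.symm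
        subst hpb
        have hv : v = p' ++ q := by
          rw [List.cons_append] at hpq
          injection hpq
        have := ih (d+1) hbr' p' q hv
        simp [List.count_cons]
        omega

/-- Intermediate value: if the final excess of `false` is `c`, some prefix has excess exactly c. -/
lemma ivt : ∀ (z : List Bool) (c : ℕ), z.count false ≥ z.count true + c →
    ∃ p q, z = p ++ q ∧ p.count false = p.count true + c := by
  intro z
  induction z using List.reverseRecOn with
  | nil =>
    intro c h
    simp at h
    exact ⟨[], [], rfl, by simp [h]⟩
  | append_singleton z' b ih =>
    intro c h
    by_cases h' : z'.count false ≥ z'.count true + c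
    · obtain ⟨p, q, hz, hp⟩ := ih c h'
      exact ⟨p, q ++ [b], by rw [hz, List.append_assoc], hp⟩
    · push_neg at h'
      cases b
      · refine ⟨z' ++ [false], [], by simp, ?_⟩
        simp [List.count_append] at h ⊢
        omega
      · exfalso
        simp [List.count_append] at h
        omega

lemma cnt_len (w : List Bool) : w.count true + w.count false = w.length := by
  induction w with
  | nil => rfl
  | cons b t ih => cases b <;> simp [List.count_cons] <;> omega

/-- Ballot condition + balanced counts imply Dyck. -/
lemma dy_of_ballot : ∀ (n : ℕ) (w : List Bool), w.length ≤ n →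
    (∀ p q, w = p ++ q → p.count false ≤ p.count true) →
    w.count false = w.count true → Dy w := by
  intro n
  induction n with
  | zero =>
    intro w hw _ _
    have h0 : w = [] := List.length_eq_zero_iff.mp (by omega)
    subst h0
    exact Dy.nil
  | succ n ihn =>
    intro w hw hbal hcnt
    rcases w with _ | ⟨b, v⟩
    · exact Dy.nil
    cases b
    · exfalso
      have := hbal [false] v rfl
      simp at this
    · -- w = true :: v ; find minimal prefix of v with excess 1
      have hv1 : v.count false = v.count true + 1 := by
        simp [List.count_cons] at hcnt
        omega
      have hex : ∃ n', ∃ p q, v = p ++ q ∧ p.length = n' ∧ p.count false = p.count true + 1 :=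
        ⟨v.length, v, [], by simp, rfl, hv1⟩
      classical
      obtain ⟨p0, q0, hsplit, hlen0, hexc⟩ := Nat.find_spec hex
      set n0 := Nat.find hex with hn0
      -- p0 nonempty, and its last letter must be false
      have hp0ne : p0 ≠ [] := by
        intro h; rw [h] at hexc; simp at hexc
      obtain ⟨u, b', rfl⟩ := List.eq_nil_or_concat p0 |>.resolve_left hp0ne
      rw [List.concat_eq_append] at hsplit hexc hlen0
      cases b'
      · -- last letter false: u is the Dyck block
        have hucnt : u.count false = u.count true := by
          simp [List.count_append] at hexc
          omega
        have huDy : Dy u := by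
          refine ihn u ?_ ?_ hucnt
        -- length bound
          · have : u.length + 1 ≤ v.length := by
              have := congrArg List.length hsplit
              simp at this
              omega
            simp at hw
            omega
          · intro p q hpq
            by_contra hc
            push_neg at hc
            -- p is a prefix of v with excess ≥ 1 and length < n0 : contradiction via ivt
            have hpexc : p.count false ≥ p.count true + 1 := hc
            obtain ⟨p1, q1, hp1, hexc1⟩ := ivt p 1 hpexc
            have hlt : p1.length < n0 := by
              have h1 := congrArg List.length hp1
              have h2 := congrArg List.length hpq
              have h4 : u.length + 1 = n0 := by simpa using hlen0
              simp at h1 h2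
              omega
            have : v = p1 ++ (q1 ++ q ++ false :: q0) := by
              rw [hsplit, hpq, hp1]
              simp [List.append_assoc]
            exact Nat.find_min hex hlt ⟨p1, _, this, rfl, hexc1⟩
        -- second block
        have hq0cnt : q0.count false = q0.count true := by
          have := congrArg (List.count false) hsplit
          have h2 := congrArg (List.count true) hsplit
          simp [List.count_append] at this h2
          omega
        have hq0Dy : Dy q0 := by
          refine ihn q0 ?_ ?_ hq0cnt
          · have := congrArg List.length hsplit
            simp at this hw
            omega
          · intro p q hpq
            have := hbal (true :: u ++ false :: p) q
              (by rw [hsplit, hpq]; simp)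
            simp [List.count_append, List.count_cons] at this
            omega
        have heq : true :: v = true :: u ++ false :: q0 := by rw [hsplit]; simp
        rw [heq]
        exact Dy.cons huDy hq0Dy
      · -- last letter true : contradiction with minimality via ivt
        exfalso
        have huexc : u.count false ≥ u.count true + 2 := by
          simp [List.count_append] at hexc
          omega
        obtain ⟨p1, q1, hp1, hexc1⟩ := ivt u 1 (by omega)
        have hlt : p1.length < n0 := by
          have h1 := congrArg List.length hp1
          have h4 : u.length + 1 = n0 := by simpa using hlen0
          simp at h1
          omega
        have : v = p1 ++ (q1 ++ true :: q0) := by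
          rw [hsplit, hp1]; simp
        exact Nat.find_min hex hlt ⟨p1, _, this, rfl, hexc1⟩

end BT
namespace BT

/-! ### Dyck word properties and tree correspondence -/

lemma dy_counts {w : List Bool} (h : Dy w) : w.count false = w.count true := by
  induction h with
  | nil => rfl
  | cons hu hv ihu ihv => simp [List.count_append, List.count_cons]; omega

lemma dy_prefix {w : List Bool} (h : Dy w) :
    ∀ p q, w = p ++ q → p.count false ≤ p.count true := by
  induction h with
  | nil =>
    intro p q hpq
    obtain ⟨rfl, -⟩ := List.append_eq_nil_iff.mp hpq.symm
    simp
  | @cons u v hu hv ihu ihv =>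
    intro p q hpq
    rcases p with _ | ⟨pb, p'⟩
    · simp
    have hpb : pb = true := by
      rw [List.cons_append] at hpq; injection hpq with h1 _; exact h1.symm
    subst hpb
    have hrest : u ++ false :: v = p' ++ q := by
      rw [List.cons_append] at hpq; injection hpq
    rcases List.append_eq_append_iff.mp hrest.symm with ⟨a', ha1, ha2⟩ | ⟨c', hc1, hc2⟩
    · -- u = p' ++ a'
      have := ihu p' a' ha1
      simp [List.count_cons]
      omega
    · -- p' = u ++ c', false :: v = c' ++ q
      rcases c' with _ | ⟨cb, c''⟩
      · simp at hc1
        subst hc1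
        have := dy_counts hu
        simp [List.count_cons]
        omega
      · have hcb : cb = false := by
          rw [List.cons_append] at hc2; injection hc2 with h1 _; exact h1.symm
        subst hcb
        have hv' : v = c'' ++ q := by
          rw [List.cons_append] at hc2; injection hc2
        have h1 := ihv c'' q hv'
        have h2 := dy_counts hu
        subst hc1
        simp [List.count_cons, List.count_append]
        omega

/-- Uniqueness of the Dyck first-block decomposition (length part). -/
lemma dy_split_len {x x' y y' : List Bool} (hx : Dy x) (hx' : Dy x')
    (h : x ++ false :: y = x' ++ false :: y') : x.length = x'.length := by
  -- helper: not shorter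
  have key : ∀ (a a' b b' : List Bool), Dy a → Dy a' →
      a ++ false :: b = a' ++ false :: b' → a.length < a'.length → False := by
    intro a a' b b' ha ha' heq hlt
    rcases List.append_eq_append_iff.mp heq with ⟨m, hm1, hm2⟩ | ⟨m, hm1, hm2⟩
    · -- a' = a ++ m, false :: b = m ++ false :: b'
      rcases m with _ | ⟨mb, m'⟩
      · simp at hm1; subst hm1; simp at hlt
      have hmb : mb = false := by
        rw [List.cons_append] at hm2; injection hm2 with h1 _; exact h1.symm
      subst hmb
      have h1 := dy_prefix ha' (a ++ [false]) m' (by rw [hm1]; simp)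
      have h2 := dy_counts ha
      simp [List.count_append] at h1
      omega
    · -- a = a' ++ m, contradicts hlt by length
      have := congrArg List.length hm1
      simp at this
      omega
  rcases Nat.lt_trichotomy x.length x'.length with h1 | h1 | h1
  · exact absurd (key x x' y y' hx hx' h h1) not_false
  · exact h1
  · exact absurd (key x' x y' y hx' hx h.symm h1) not_false

/-- Encoding of plane binary trees as Dyck words. -/
def tr : Tree Unit → List Bool
  | BinaryTree.nil => []
  | BinaryTree.node _ a b => true :: tr a ++ false :: tr b

lemma tr_dy (t : Tree Unit) : Dy (tr t) := by
  induction t with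
  | nil => exact Dy.nil
  | node _ a b iha ihb => exact Dy.cons iha ihb

lemma tr_len (t : Tree Unit) : (tr t).length = 2 * t.numNodes := by
  induction t with
  | nil => rfl
  | node _ a b iha ihb => simp [tr, Tree.numNodes, BinaryTree.numNodes, iha, ihb]; omega

lemma tr_surj {w : List Bool} (h : Dy w) : ∃ t : Tree Unit, tr t = w := by
  induction h with
  | nil => exact ⟨Tree.nil, rfl⟩
  | cons hu hv ihu ihv =>
    obtain ⟨ta, hta⟩ := ihu
    obtain ⟨tb, htb⟩ := ihv
    exact ⟨Tree.node () ta tb, by simp [tr, hta, htb]⟩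

lemma tr_inj : Function.Injective tr := by
  intro t
  induction t with
  | nil =>
    intro t' h
    cases t' with
    | nil => rfl
    | node _ a b => simp [tr] at h
  | node _ a b iha ihb =>
    intro t' h
    cases t' with
    | nil => simp [tr] at h
    | node u a' b' =>
      simp only [tr, List.cons_append] at h
      injection h with _ h
      have hlen := dy_split_len (tr_dy a) (tr_dy a') h
      obtain ⟨h1, h2⟩ := List.append_inj h (by simp [hlen])
      injection h2 with _ h2
      have := iha h1
      have := ihb h2
      cases u
      subst_vars
      rfl

/-! ### snk injectivity -/

lemma snk_ne_leaf (w : List Bool) : snk w ≠ leaf := by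
  rcases w with _ | ⟨b, t⟩
  · simp [snk, snkC]
  · cases b <;> simp [snk, snkC]

lemma snk_inj : Function.Injective snk := by
  intro w
  induction w with
  | nil =>
    intro w' h
    rcases w' with _ | ⟨b, t⟩
    · rfl
    · cases b <;> simp only [snk, snkC] at h <;> injection h with h1 h2
      · exact absurd h2.symm (snk_ne_leaf t)
      · exact absurd h1.symm (snk_ne_leaf t)
  | cons b v ih =>
    intro w' h
    rcases w' with _ | ⟨b', t⟩
    · cases b <;> simp only [snk, snkC] at h <;> injection h with h1 h2
      · exact absurd h2 (snk_ne_leaf v)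
      · exact absurd h1 (snk_ne_leaf v)
    · cases b <;> cases b' <;> simp only [snk, snkC] at h <;> injection h with h1 h2
      · rw [ih h2]
      · exact absurd h2 (snk_ne_leaf v)
      · exact absurd h1 (snk_ne_leaf v)
      · rw [ih h1]

lemma cnt_neg_false (w : List Bool) : (neg w).count false = w.count true := by
  induction w with
  | nil => rfl
  | cons b t ih => cases b <;> simp [List.count_cons, ih]

lemma cnt_neg_true (w : List Bool) : (neg w).count true = w.count false := by
  induction w with
  | nil => rfl
  | cons b t ih => cases b <;> simp [List.count_cons, ih]

end BT
namespace BT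

/-- The good intervals of size 2k+1 are exactly the Dyck snakes. -/
lemma good_set_eq (k : ℕ) :
    {p : BT × BT | interval p (2 * k + 1) ∧ modern p ∧ synced p ∧ selfDual p}
      = (fun w => (snk w, snk (neg w))) '' {w : List Bool | Dy w ∧ w.length = 2 * k} := by
  ext p
  simp only [Set.mem_setOf_eq, Set.mem_image]
  constructor
  · rintro ⟨⟨hs1, hs2, hle⟩, hmod, hsync, hd1, hd2⟩
    have h2 : p.2 = mir p.1 := hd2.symm
    have hT : p.1 ≠ leaf := by
      intro h; rw [h] at hs1; simp [size] at hs1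
    have hmod' : tle (node p.1 leaf) (node leaf (mir p.1)) := by
      rw [← h2]; exact hmod
    have hsync' : canopy p.1 = canopy (mir p.1) := by
      rw [← h2]; exact hsync
    obtain ⟨a, hrep, hlena⟩ := canopy_shape hT hmod' hsync'
    have ha : a = k + 1 := by rw [hs1] at hlena; omega
    subst ha
    rcases snake_of_canopy p.1 (k+1) (k+1) hrep with h | ⟨w, hw⟩
    · exact absurd h hT
    have hwlen : w.length = 2 * k := by
      have := size_snk w
      rw [← hw, hs1] at this
      omega
    -- counts
    have hcan : List.replicate (w.count false + 1) 1 ++ List.replicate (w.count true + 1) 0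
        = List.replicate (k+1) 1 ++ List.replicate (k+1) 0 := by
      rw [← canopy_snk, ← hw, hrep]
    have hcf : w.count false = k := by
      have := congrArg (List.count 1) hcan
      simp [List.count_append, List.count_replicate] at this
      omega
    have hct : w.count true = k := by
      have := cnt_len w
      omega
    -- ballot from bracket comparison
    have hle' : tle (snk w) (snk (neg w)) := by
      rw [← mir_snk, ← hw, ← h2]; exact hle
    have hcle := tle_br hle'
    have hballot := ballot_of_br w 0 (fun i => by simpa using hcle.2 i)
    have hDy : Dy w := dy_of_ballot w.length w le_rfl
      (fun p q hpq => by simpa using hballot p q hpq) (by rw [hcf, hct])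
    refine ⟨w, ⟨hDy, hwlen⟩, ?_⟩
    have hp2 : snk (neg w) = p.2 := by rw [← mir_snk, ← hw, ← h2]
    rw [Prod.ext_iff]
    exact ⟨hw.symm, hp2⟩
  · rintro ⟨w, ⟨hDy, hlen⟩, rfl⟩
    have hnl : (neg w).length = w.length := by simp [neg]
    have hcnt := dy_counts hDy
    refine ⟨⟨?_, ?_, tle_G hDy⟩, modern_snk hDy, ?_, ?_, ?_⟩
    · simp [size_snk, hlen]
    · simp [size_snk, hnl, hlen]
    · show canopy (snk w) = canopy (snk (neg w))
      rw [canopy_snk, canopy_snk, cnt_neg_false, cnt_neg_true, hcnt]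
    · show mir (snk (neg w)) = snk w
      rw [mir_snk, neg_neg]
    · show mir (snk w) = snk (neg w)
      exact mir_snk w

end BT

theorem count_self_dual_modern_synchronized_intervals (k : ℕ) :
    (1 ≤ k →
      {p : BT × BT | BT.interval p (2 * k) ∧ BT.modern p ∧ BT.synced p ∧ BT.selfDual p} =
        (∅ : Set (BT × BT))) ∧
    (k + 1) *
        Set.ncard
          {p : BT × BT | BT.interval p (2 * k + 1) ∧ BT.modern p ∧ BT.synced p ∧ BT.selfDual p} =
      Nat.choose (2 * k) k := by
  constructor
  · intro hk
    apply Set.eq_empty_iff_forall_notMem.mpr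
    rintro p ⟨⟨hs1, hs2, hle⟩, hmod, hsync, hd1, hd2⟩
    have h2 : p.2 = BT.mir p.1 := hd2.symm
    have hT : p.1 ≠ BT.leaf := by
      intro h; rw [h] at hs1; simp [BT.size] at hs1; omega
    have hmod' : BT.tle (BT.node p.1 BT.leaf) (BT.node BT.leaf (BT.mir p.1)) := by
      rw [← h2]; exact hmod
    have hsync' : BT.canopy p.1 = BT.canopy (BT.mir p.1) := by
      rw [← h2]; exact hsync
    obtain ⟨a, _, hlena⟩ := BT.canopy_shape hT hmod' hsync'
    rw [hs1] at hlena
    omega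
  · rw [BT.good_set_eq k]
    have hfinj : Function.Injective (fun w => (BT.snk w, BT.snk (BT.neg w))) := by
      intro x y h
      exact BT.snk_inj (congrArg Prod.fst h)
    rw [Set.ncard_image_of_injective _ hfinj]
    have hWV : {w : List Bool | BT.Dy w ∧ w.length = 2 * k}
        = BT.tr '' {t : Tree Unit | t.numNodes = k} := by
      ext w
      simp only [Set.mem_setOf_eq, Set.mem_image]
      constructor
      · rintro ⟨hDy, hlen⟩
        obtain ⟨t, ht⟩ := BT.tr_surj hDy
        refine ⟨t, ?_, ht⟩
        have := BT.tr_len t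
        rw [ht, hlen] at this
        omega
      · rintro ⟨t, htk, rfl⟩
        exact ⟨BT.tr_dy t, by rw [BT.tr_len, htk]⟩
    rw [hWV, Set.ncard_image_of_injective _ BT.tr_inj]
    have hV : {t : Tree Unit | t.numNodes = k} = ↑(BinaryTree.treesOfNumNodesEq k) := by
      ext t
      simp [BinaryTree.mem_treesOfNumNodesEq]
    rw [hV, Set.ncard_coe_finset, BinaryTree.treesOfNumNodesEq_card_eq_catalan]
    have := succ_mul_catalan_eq_centralBinom k
    rw [this]
    rfl
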